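/- Fix an integer k ≥ 0, an integer m ≥ 1, pairwise distinct θ_1, …, θ_m each either a positive real number or θ_ℓ = iβ_ℓ with β_ℓ ∈ (0,π), and integers τ_1, …, τ_m ≥ 1; set N := 2(τ_1 + ⋯ + τ_m) and w_ℓ := e^{−θ_ℓ/2^{k+1}}, and assume the 2m points w_1, w_1⁻¹, …, w_m, w_m⁻¹ are pairwise distinct. Let K ∈ ℂ∖{0}, define B(z) := K·z^{−N/2}·∏_{ℓ=1}^{m}[(e^{θ_ℓ/2^{k+1}}z + 1)(e^{−θ_ℓ/2^{k+1}}z + 1)]^{τ_ℓ}, let c be a Laurent polynomial over ℂ supported in degrees [1−N/2, N/2−1] with c(z) = c(z⁻¹) for all z ≠ 0, and set a(z) := B(z)·c(z). If for every ℓ = 1, …, m and every s = 0, …, τ_ℓ−1 one has: the s-th complex derivative of a at w_ℓ and at w_ℓ⁻¹ both equal 2 when s = 0 and equal 0 when s ≥ 1, then a(z) + a(−z) = 2 for every z ≠ 0; that is, the subdivision symbol a is interpolatory. -/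

import Mathlib

open Complex Finset

open Filter Topology


private lemma iDW_open {f : ℂ → ℂ} {U : Set ℂ} (hU : IsOpen U) {x : ℂ} (hx : x ∈ U) (n : ℕ) :
    iteratedDerivWithin n f U x = iteratedDeriv n f x := by
  rw [iteratedDerivWithin, iteratedDeriv, iteratedFDerivWithin_of_isOpen n hU hx]

private lemma itd_const (n : ℕ) (c : ℂ) (x : ℂ) :
    iteratedDeriv n (fun _ : ℂ => c) x = if n = 0 then c else 0 := by
  induction n generalizing c x with
  | zero => simp
  | succ n ih =>
    rw [iteratedDeriv_succ']
    have : deriv (fun _ : ℂ => c) = fun _ : ℂ => (0 : ℂ) := by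
      funext y; simp
    rw [this, ih]
    simp

private lemma itd_add {U : Set ℂ} (hU : IsOpen U) {x : ℂ} (hx : x ∈ U) {f g : ℂ → ℂ}
    (hf : DifferentiableOn ℂ f U) (hg : DifferentiableOn ℂ g U) (n : ℕ) :
    iteratedDeriv n (fun z => f z + g z) x = iteratedDeriv n f x + iteratedDeriv n g x := by
  have hf' : ContDiffOn ℂ n f U := (hf.analyticOnNhd hU).contDiffOn hU.uniqueDiffOn
  have hg' : ContDiffOn ℂ n g U := (hg.analyticOnNhd hU).contDiffOn hU.uniqueDiffOn
  have := iteratedDerivWithin_add hx hU.uniqueDiffOn (hf' x hx) (hg' x hx)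
  rw [iDW_open hU hx, iDW_open hU hx, iDW_open hU hx] at this
  exact this

private lemma vanish_mul_aux : ∀ (n : ℕ) (h : ℂ → ℂ) (U : Set ℂ) (z₀ : ℂ), IsOpen U → z₀ ∈ U →
    DifferentiableOn ℂ h U → (∀ s < n, iteratedDeriv s h z₀ = 0) →
    ∀ s < n + 1, iteratedDeriv s (fun z => (z - z₀) * h z) z₀ = 0 := by
  intro n
  induction n with
  | zero =>
    intro h U z₀ _ _ _ _ s hs
    have : s = 0 := by omega
    subst this
    simp
  | succ n ih =>
    intro h U z₀ hU hz hd hvan s hs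
    match s with
    | 0 => simp
    | s + 1 =>
      rw [iteratedDeriv_succ']
      have han : AnalyticOnNhd ℂ h U := hd.analyticOnNhd hU
      have hEV : deriv (fun z => (z - z₀) * h z) =ᶠ[𝓝 z₀]
          fun z => h z + (z - z₀) * deriv h z := by
        filter_upwards [hU.mem_nhds hz] with z hzU
        have h1 : DifferentiableAt ℂ h z := (han z hzU).differentiableAt
        have h2 : DifferentiableAt ℂ (fun z : ℂ => z - z₀) z := by fun_prop
        rw [deriv_fun_mul h2 h1]
        have : deriv (fun z : ℂ => z - z₀) z = 1 := by
          simp [deriv_sub_const]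
        rw [this]; ring
      rw [Filter.EventuallyEq.iteratedDeriv_eq s hEV]
      have hd' : DifferentiableOn ℂ (deriv h) U := (han.deriv_of_isOpen hU).differentiableOn
      have hdm : DifferentiableOn ℂ (fun z => (z - z₀) * deriv h z) U := by
        exact (differentiable_id.sub_const z₀).differentiableOn.mul hd'
      rw [itd_add hU hz hd hdm s]
      have t1 : iteratedDeriv s h z₀ = 0 := hvan s (by omega)
      have t2 : iteratedDeriv s (fun z => (z - z₀) * deriv h z) z₀ = 0 := by
        refine ih (deriv h) U z₀ hU hz hd' (fun t ht => ?_) s (by omega)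
        have := congrFun (iteratedDeriv_succ' (n := t) (f := h)) z₀
        rw [← this]
        exact hvan (t + 1) (by omega)
      rw [t1, t2, add_zero]

private lemma vanish_pow_mul (n : ℕ) (h : ℂ → ℂ) {U : Set ℂ} (z₀ : ℂ) (hU : IsOpen U)
    (hz : z₀ ∈ U) (hd : DifferentiableOn ℂ h U) :
    ∀ s < n, iteratedDeriv s (fun z => (z - z₀) ^ n * h z) z₀ = 0 := by
  induction n with
  | zero => intro s hs; exact absurd hs (Nat.not_lt_zero s)
  | succ n ih =>
    have heq : (fun z => (z - z₀) ^ (n + 1) * h z)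
        = fun z => (z - z₀) * ((z - z₀) ^ n * h z) := by
      funext z; ring
    rw [heq]
    refine vanish_mul_aux n _ U z₀ hU hz ?_ ih
    exact (((differentiable_id.sub_const z₀).pow n).differentiableOn).mul hd

private lemma exists_factor_of_vanish {f : ℂ → ℂ} {z₀ : ℂ} (hf : AnalyticAt ℂ f z₀) (n : ℕ)
    (hvan : ∀ s < n, iteratedDeriv s f z₀ = 0) :
    ∃ g : ℂ → ℂ, AnalyticAt ℂ g z₀ ∧ ∀ᶠ z in 𝓝 z₀, f z = (z - z₀) ^ n * g z := by
  obtain ⟨p, hp⟩ := hf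
  by_cases hp0 : p = 0
  · refine ⟨fun _ => 0, analyticAt_const, ?_⟩
    filter_upwards [hp.locally_zero_iff.mpr hp0] with z hz
    simp [hz]
  · -- coefficients below n vanish
    obtain ⟨r, hball⟩ := hp
    have hcoeff : ∀ s < n, p s = 0 := by
      intro s hs
      have h1 := hball.factorial_smul (1 : ℂ) s
      have h2 : iteratedFDeriv ℂ s f z₀ (fun _ => (1 : ℂ)) = iteratedDeriv s f z₀ := rfl
      rw [h2, hvan s hs] at h1
      have h3 : p s (fun _ => (1 : ℂ)) = 0 := by
        have := h1
        have hfac : (s.factorial : ℂ) ≠ 0 := by exact_mod_cast s.factorial_ne_zero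
        have : (s.factorial : ℂ) * p s (fun _ => (1 : ℂ)) = 0 := by
          rw [← this]; simp [nsmul_eq_mul]
        exact (mul_eq_zero.mp this).resolve_left hfac
      -- a multilinear map on ℂ vanishing at ones is zero
      have h4 : p.coeff s = 0 := h3
      rwa [FormalMultilinearSeries.coeff_eq_zero] at h4
    have hp' : HasFPowerSeriesAt f p z₀ := ⟨r, hball⟩
    have horder : n ≤ p.order := by
      by_contra hlt
      push_neg at hlt
      exact p.apply_order_ne_zero hp0 (hcoeff p.order hlt)
    have hg : AnalyticAt ℂ ((Function.swap dslope z₀)^[p.order] f) z₀ :=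
      ⟨_, hp'.has_fpower_series_iterate_dslope_fslope p.order⟩
    refine ⟨fun z => (z - z₀) ^ (p.order - n) * (Function.swap dslope z₀)^[p.order] f z,
      (((analyticAt_id.sub analyticAt_const).pow _).mul hg), ?_⟩
    filter_upwards [Filter.Eventually.of_forall hp'.eq_pow_order_mul_iterate_dslope] with z hz
    rw [hz, smul_eq_mul, ← mul_assoc, ← pow_add]
    congr 2
    omega

open Polynomial in
private lemma pow_dvd_of_eventually {F : Polynomial ℂ} (hF : F ≠ 0) {v : ℂ} {g : ℂ → ℂ} {n : ℕ}
    (hg : ContinuousAt g v) (hev : ∀ᶠ z in 𝓝 v, F.eval z = (z - v) ^ n * g z) :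
    (X - C v) ^ n ∣ F := by
  rw [← Polynomial.le_rootMultiplicity_iff hF]
  by_contra hlt
  push_neg at hlt
  set ρ := F.rootMultiplicity v with hρ
  set u := F /ₘ (X - C v) ^ ρ with hu
  have hFe : (X - C v) ^ ρ * u = F := F.pow_mul_divByMonic_rootMultiplicity_eq v
  have huv : u.eval v ≠ 0 := Polynomial.eval_divByMonic_pow_rootMultiplicity_ne_zero v hF
  have hev2 : ∀ᶠ z in 𝓝[≠] v, u.eval z = (z - v) ^ (n - ρ) * g z := by
    filter_upwards [eventually_nhdsWithin_of_eventually_nhds hev,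
      self_mem_nhdsWithin] with z hz hz'
    have hzv : z - v ≠ 0 := sub_ne_zero.mpr hz'
    have h1 : (z - v) ^ ρ * u.eval z = (z - v) ^ n * g z := by
      rw [← hz, ← hFe]; simp
    have h2 : (z - v) ^ n = (z - v) ^ ρ * (z - v) ^ (n - ρ) := by
      rw [← pow_add]; congr 1; omega
    rw [h2, mul_assoc] at h1
    exact mul_left_cancel₀ (pow_ne_zero _ hzv) h1
  have h1 : Filter.Tendsto (fun z => u.eval z) (𝓝[≠] v) (𝓝 (u.eval v)) :=
    ((u.continuous_aeval).continuousAt.tendsto).mono_left nhdsWithin_le_nhds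
  have h2 : Filter.Tendsto (fun z => (z - v) ^ (n - ρ) * g z) (𝓝[≠] v) (𝓝 0) := by
    have hc : ContinuousAt (fun z => (z - v) ^ (n - ρ) * g z) v := by
      exact ((continuousAt_id.sub continuousAt_const).pow _).mul hg
    have := hc.tendsto.mono_left (nhdsWithin_le_nhds (s := {v}ᶜ))
    convert this using 2
    have : n - ρ ≠ 0 := by omega
    simp [this]
  have := tendsto_nhds_unique (h1.congr' hev2) h2
  exact huv this

private lemma exp_ne_neg_one {u : ℂ} (hIm : |u.im| < Real.pi) : Complex.exp u ≠ -1 := by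
  intro h
  have h1 : Complex.exp (u - Real.pi * I) = 1 := by
    rw [Complex.exp_sub, h, Complex.exp_pi_mul_I]
    norm_num
  obtain ⟨nn, hn⟩ := Complex.exp_eq_one_iff.mp h1
  have him : u.im - Real.pi = nn * (2 * Real.pi) := by
    have := congrArg Complex.im hn
    simpa using this
  have hpi := Real.pi_pos
  have habs : |u.im| = |(2 * nn + 1 : ℝ)| * Real.pi := by
    have : u.im = (2 * nn + 1 : ℝ) * Real.pi := by push_cast at him ⊢; linarith
    rw [this, abs_mul, abs_of_pos hpi]
  have hodd : (1 : ℝ) ≤ |(2 * nn + 1 : ℝ)| := by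
    have h0 : (2 * nn + 1 : ℤ) ≠ 0 := by omega
    have := Int.one_le_abs h0
    calc (1:ℝ) ≤ |(2 * nn + 1 : ℤ)| := by exact_mod_cast this
    _ = |(2 * nn + 1 : ℝ)| := by push_cast [Int.cast_abs]; norm_num
  nlinarith [abs_nonneg u.im]

open Polynomial in
private lemma odd_dvd_transfer {F : Polynomial ℂ} (hodd : F.comp (-X) = -F) {v : ℂ} {n : ℕ}
    (hd : (X - C v) ^ n ∣ F) : (X - C (-v)) ^ n ∣ F := by
  obtain ⟨q, hq⟩ := hd
  have h1 : F.comp (-X) = ((X - C v) ^ n).comp (-X) * q.comp (-X) := by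
    rw [hq, mul_comp]
  rw [hodd] at h1
  have h2 : ((X - C v) ^ n).comp (-X) = (-1 : ℂ[X]) ^ n * (X - C (-v)) ^ n := by
    rw [pow_comp, ← mul_pow]
    congr 1
    simp [sub_comp]
    ring
  have h3 : (X - C (-v)) ^ n ∣ -F :=
    ⟨(-1 : ℂ[X]) ^ n * q.comp (-X), by rw [h1, h2]; ring⟩
  exact (dvd_neg).mp h3

/-- Even-order symmetric exponential pseudo-splines with full reproduction (`M = N`,
shift parameter `p = 0`) are interpolatory: `a(z) + a(-z) = 2`. -/
theorem exponential_pseudoSpline_interpolatory (k m : ℕ) (hm : 1 ≤ m)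
    (θ : Fin m → ℂ)
    (hθ : ∀ ℓ, (∃ t : ℝ, 0 < t ∧ θ ℓ = (t : ℂ)) ∨
               (∃ β : ℝ, 0 < β ∧ β < Real.pi ∧ θ ℓ = (β : ℂ) * I))
    (hθinj : Function.Injective θ)
    (τ : Fin m → ℕ) (hτ : ∀ ℓ, 1 ≤ τ ℓ)
    (N : ℕ) (hN : N = 2 * ∑ ℓ, τ ℓ)
    (w : Fin m → ℂ) (hw : ∀ ℓ, w ℓ = exp (-θ ℓ / 2 ^ (k + 1)))
    (hdist : Function.Injective (fun p : Fin m × Bool => if p.2 then w p.1 else (w p.1)⁻¹))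
    (K : ℂ) (hK : K ≠ 0)
    (B : ℂ → ℂ)
    (hB : ∀ z : ℂ, B z = K * z ^ (-((N / 2 : ℕ) : ℤ)) *
      ∏ ℓ, ((exp (θ ℓ / 2 ^ (k + 1)) * z + 1) * (exp (-θ ℓ / 2 ^ (k + 1)) * z + 1)) ^ τ ℓ)
    (c : ℂ → ℂ) (co : ℤ → ℂ)
    (hc : ∀ z : ℂ, z ≠ 0 →
      c z = ∑ j ∈ Finset.Icc (1 - ((N / 2 : ℕ) : ℤ)) (((N / 2 : ℕ) : ℤ) - 1), co j * z ^ j)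
    (hcsym : ∀ z : ℂ, z ≠ 0 → c z = c z⁻¹)
    (a : ℂ → ℂ) (ha : ∀ z : ℂ, a z = B z * c z)
    (hrep : ∀ ℓ, ∀ s < τ ℓ,
      iteratedDeriv s a (w ℓ) = (if s = 0 then 2 else 0) ∧
      iteratedDeriv s a ((w ℓ)⁻¹) = (if s = 0 then 2 else 0)) :
    ∀ z : ℂ, z ≠ 0 → a z + a (-z) = 2 := by
  classical
  set M : ℕ := ∑ ℓ, τ ℓ with hM
  have hM1 : 1 ≤ M :=
    le_trans (hτ ⟨0, hm⟩) (Finset.single_le_sum (fun i _ => Nat.zero_le (τ i)) (mem_univ (⟨0, hm⟩ : Fin m)))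
  have hNM : (N / 2 : ℕ) = M := by omega
  set D : ℕ := 2 * M - 1 with hD
  have hDodd : Odd D := ⟨M - 1, by omega⟩
  have hw0 : ∀ ℓ, w ℓ ≠ 0 := fun ℓ => by rw [hw]; exact Complex.exp_ne_zero _
  have hwexp : ∀ ℓ, Complex.exp (θ ℓ / 2 ^ (k + 1)) = (w ℓ)⁻¹ := by
    intro ℓ; rw [hw ℓ, ← Complex.exp_neg]; congr 1; ring
  set U : Set ℂ := {(0 : ℂ)}ᶜ with hUdef
  have hU : IsOpen U := isOpen_compl_singleton
  have hmem : ∀ {z : ℂ}, z ≠ 0 → z ∈ U := fun hz => hz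
  -- the polynomials
  set Q : Polynomial ℂ :=
    ∏ ℓ, ((Polynomial.C (w ℓ)⁻¹ * Polynomial.X + 1) *
      (Polynomial.C (w ℓ) * Polynomial.X + 1)) ^ τ ℓ with hQdef
  set Cp : Polynomial ℂ := ∑ j ∈ Finset.Icc (1 - (M : ℤ)) ((M : ℤ) - 1),
    Polynomial.C (co j) * Polynomial.X ^ (j + (M : ℤ) - 1).toNat with hCpdef
  set P₀ : Polynomial ℂ := Q * Cp with hP₀def
  set F : Polynomial ℂ := Polynomial.C K * (P₀ - P₀.comp (-Polynomial.X)) -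
    Polynomial.C 2 * Polynomial.X ^ D with hFdef
  -- evaluation formulas
  have hQev : ∀ z : ℂ, Polynomial.eval z Q =
      ∏ ℓ, (((w ℓ)⁻¹ * z + 1) * ((w ℓ) * z + 1)) ^ τ ℓ := by
    intro z
    rw [hQdef, Polynomial.eval_prod]
    exact Finset.prod_congr rfl fun ℓ _ => by simp

  have hcM : ∀ z : ℂ, z ≠ 0 →
      c z = ∑ j ∈ Finset.Icc (1 - (M : ℤ)) ((M : ℤ) - 1), co j * z ^ j := by
    intro z hz
    rw [hc z hz, hNM]
  have hBQ : ∀ z : ℂ, B z = K * z ^ (-(M : ℤ)) * Polynomial.eval z Q := by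
    intro z
    rw [hB z, hNM, hQev z]
    congr 1
    exact Finset.prod_congr rfl fun ℓ _ => by rw [hwexp ℓ, ← hw ℓ]
  have hCpev : ∀ z : ℂ, z ≠ 0 → Polynomial.eval z Cp = z ^ (M - 1) * c z := by
    intro z hz
    rw [hcM z hz, hCpdef, Polynomial.eval_finset_sum, Finset.mul_sum]
    refine Finset.sum_congr rfl fun j hj => ?_
    obtain ⟨hj1, hj2⟩ := Finset.mem_Icc.mp hj
    have hnn : 0 ≤ j + (M : ℤ) - 1 := by omega
    have h1 : (z : ℂ) ^ (j + (M : ℤ) - 1).toNat = z ^ (j + (M : ℤ) - 1) := by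
      rw [← zpow_natCast, Int.toNat_of_nonneg hnn]
    have h2 : (z : ℂ) ^ (j + (M : ℤ) - 1) = z ^ j * z ^ ((M : ℤ) - 1) := by
      rw [← zpow_add₀ hz]; ring_nf
    have h3 : (z : ℂ) ^ ((M : ℤ) - 1) = z ^ (M - 1) := by
      rw [← zpow_natCast]
      congr 1
      omega
    simp only [Polynomial.eval_mul, Polynomial.eval_C, Polynomial.eval_pow, Polynomial.eval_X]
    rw [h1, h2, h3]; ring
  have hafD : ∀ z : ℂ, z ≠ 0 → a z * z ^ D = K * Polynomial.eval z P₀ := by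
    intro z hz
    have hsplit : (z : ℂ) ^ D = z ^ M * z ^ (M - 1) := by
      rw [← pow_add]; congr 1; omega
    have hzm : (z : ℂ) ^ (-(M : ℤ)) * z ^ M = 1 := by
      rw [zpow_neg, zpow_natCast]
      exact inv_mul_cancel₀ (pow_ne_zero _ hz)
    rw [hP₀def, Polynomial.eval_mul, hCpev z hz, ha, hBQ, hsplit]
    calc K * z ^ (-(M : ℤ)) * Polynomial.eval z Q * c z * (z ^ M * z ^ (M - 1))
        = K * Polynomial.eval z Q * (z ^ (-(M : ℤ)) * z ^ M) * (z ^ (M - 1) * c z) := by ring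
      _ = K * (Polynomial.eval z Q * (z ^ (M - 1) * c z)) := by rw [hzm]; ring
  have hFeval : ∀ z : ℂ, z ≠ 0 →
      Polynomial.eval z F = z ^ D * (a z + a (-z) - 2) := by
    intro z hz
    have h1 := hafD z hz
    have h2 := hafD (-z) (neg_ne_zero.mpr hz)
    have hneg : (-z : ℂ) ^ D = -z ^ D := hDodd.neg_pow z
    rw [hneg] at h2
    rw [hFdef]
    simp only [Polynomial.eval_sub, Polynomial.eval_mul, Polynomial.eval_C, Polynomial.eval_pow,
      Polynomial.eval_X, Polynomial.eval_comp, Polynomial.eval_neg]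
    linear_combination h2 - h1
  -- reduce to F = 0
  suffices hF0 : F = 0 by
    intro z hz
    have h := hFeval z hz
    rw [hF0, Polynomial.eval_zero] at h
    have hzD : (z : ℂ) ^ D ≠ 0 := pow_ne_zero _ hz
    have := (mul_eq_zero.mp h.symm).resolve_left hzD
    linear_combination this
  -- the smooth representative of a on U
  set tA : ℂ → ℂ := fun z => K * Polynomial.eval z P₀ * (z ^ D)⁻¹ with htA
  have hEqA : Set.EqOn a tA U := by
    intro z hz
    have hz0 : z ≠ 0 := hz
    have := hafD z hz0
    rw [htA]
    field_simp
    exact this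
  have hinvD : DifferentiableOn ℂ (fun z : ℂ => (z ^ D)⁻¹) U :=
    DifferentiableOn.inv ((differentiable_pow D).differentiableOn)
      (fun z hz => pow_ne_zero _ hz)
  have htAd : DifferentiableOn ℂ tA U := by
    rw [htA]
    exact (((differentiable_const K).mul (Polynomial.differentiable P₀)).differentiableOn).mul
      hinvD
  have hvne : ∀ (ℓ : Fin m) (v : ℂ), (v = w ℓ ∨ v = (w ℓ)⁻¹) → v ≠ 0 := by
    intro ℓ v hv
    rcases hv with h | h
    · rw [h]; exact hw0 ℓ
    · rw [h]; exact inv_ne_zero (hw0 ℓ)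
  -- vanishing of tA at the negated points
  have hvanneg : ∀ ℓ : Fin m, ∀ v : ℂ, (v = w ℓ ∨ v = (w ℓ)⁻¹) →
      ∀ s < τ ℓ, iteratedDeriv s tA (-v) = 0 := by
    intro ℓ v hv s hs
    have hv0 : v ≠ 0 := hvne ℓ v hv
    obtain ⟨S, hS⟩ : ∃ S : Polynomial ℂ, ∀ z : ℂ,
        Polynomial.eval z Q = (v⁻¹) ^ τ ℓ * ((z + v) ^ τ ℓ * Polynomial.eval z S) := by
      rcases hv with h | h
      · subst h
        refine ⟨(Polynomial.C (w ℓ) * Polynomial.X + 1) ^ τ ℓ *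
          ∏ j ∈ Finset.univ.erase ℓ, ((Polynomial.C (w j)⁻¹ * Polynomial.X + 1) *
            (Polynomial.C (w j) * Polynomial.X + 1)) ^ τ j, fun z => ?_⟩
        rw [hQev z, ← Finset.mul_prod_erase Finset.univ _ (Finset.mem_univ ℓ)]
        have hfac : (w ℓ)⁻¹ * z + 1 = (w ℓ)⁻¹ * (z + w ℓ) := by
          rw [mul_add, inv_mul_cancel₀ (hw0 ℓ)]
        rw [hfac]
        simp only [Polynomial.eval_mul, Polynomial.eval_pow, Polynomial.eval_add,
          Polynomial.eval_one, Polynomial.eval_C, Polynomial.eval_X, Polynomial.eval_prod]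
        rw [mul_pow, mul_pow]
        ring
      · subst h
        refine ⟨(Polynomial.C (w ℓ)⁻¹ * Polynomial.X + 1) ^ τ ℓ *
          ∏ j ∈ Finset.univ.erase ℓ, ((Polynomial.C (w j)⁻¹ * Polynomial.X + 1) *
            (Polynomial.C (w j) * Polynomial.X + 1)) ^ τ j, fun z => ?_⟩
        rw [hQev z, ← Finset.mul_prod_erase Finset.univ _ (Finset.mem_univ ℓ)]
        have hfac : (w ℓ) * z + 1 = ((w ℓ)⁻¹)⁻¹ * (z + (w ℓ)⁻¹) := by
          rw [inv_inv, mul_add, mul_inv_cancel₀ (hw0 ℓ)]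
        rw [hfac]
        simp only [Polynomial.eval_mul, Polynomial.eval_pow, Polynomial.eval_add,
          Polynomial.eval_one, Polynomial.eval_C, Polynomial.eval_X, Polynomial.eval_prod]
        rw [mul_pow, mul_pow]
        ring
    set R : ℂ → ℂ := fun z =>
      K * (v⁻¹) ^ τ ℓ * Polynomial.eval z S * Polynomial.eval z Cp * (z ^ D)⁻¹ with hRdef
    have hEqOn : Set.EqOn tA (fun z => (z - (-v)) ^ τ ℓ * R z) U := by
      intro z hz
      simp only [htA, hRdef]
      rw [hP₀def, Polynomial.eval_mul, hS z, sub_neg_eq_add]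
      ring
    have hRd : DifferentiableOn ℂ R U := by
      rw [hRdef]
      exact ((((differentiable_const _).mul (Polynomial.differentiable S)).mul
        (Polynomial.differentiable Cp)).differentiableOn).mul hinvD
    have hmemv : (-v : ℂ) ∈ U := hmem (neg_ne_zero.mpr hv0)
    rw [hEqOn.iteratedDeriv_of_isOpen hU s hmemv]
    exact vanish_pow_mul (τ ℓ) R (-v) hU hmemv hRd s hs
  -- the symmetrized function
  set G : ℂ → ℂ := fun z => tA z + (tA (-z) + (-2 : ℂ)) with hGdef
  have hnegU : DifferentiableOn ℂ (fun z => tA (-z)) U := by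
    intro z hz
    have hmz : (-z : ℂ) ∈ U := hmem (neg_ne_zero.mpr hz)
    exact (htAd (-z) hmz).comp z (differentiable_neg.differentiableAt).differentiableWithinAt
      (fun y hy => hmem (neg_ne_zero.mpr hy))
  have hGd : DifferentiableOn ℂ G U := by
    rw [hGdef]
    exact htAd.add (hnegU.add (differentiableOn_const _))
  have hGvan : ∀ ℓ : Fin m, ∀ v : ℂ, (v = w ℓ ∨ v = (w ℓ)⁻¹) →
      ∀ s < τ ℓ, iteratedDeriv s G v = 0 := by
    intro ℓ v hv s hs
    have hv0 : v ≠ 0 := hvne ℓ v hv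
    have hmemv : v ∈ U := hmem hv0
    have htrans : iteratedDeriv s a v = iteratedDeriv s tA v := by
      refine Filter.EventuallyEq.iteratedDeriv_eq s ?_
      filter_upwards [hU.mem_nhds hmemv] with y hy
      exact hEqA hy
    have hval : iteratedDeriv s tA v = (if s = 0 then 2 else 0) := by
      rw [← htrans]
      rcases hv with h | h
      · rw [h]; exact (hrep ℓ s hs).1
      · rw [h]; exact (hrep ℓ s hs).2
    have hnegval : iteratedDeriv s (fun z => tA (-z)) v = 0 := by
      rw [iteratedDeriv_comp_neg, hvanneg ℓ v hv s hs]
      simp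
    have hsplit : iteratedDeriv s G v = iteratedDeriv s tA v +
        (iteratedDeriv s (fun z => tA (-z)) v + iteratedDeriv s (fun _ : ℂ => (-2 : ℂ)) v) := by
      rw [hGdef]
      rw [itd_add (g := fun z => tA (-z) + -2) hU hmemv htAd (hnegU.add (differentiableOn_const _)) s]
      congr 1
      exact itd_add hU hmemv hnegU (differentiableOn_const _) s
    rw [hsplit, hval, hnegval, itd_const]
    by_cases h0 : s = 0 <;> simp [h0]
  -- suppose F ≠ 0
  by_contra hFne
  have hFodd : F.comp (-Polynomial.X) = -F := by
    rw [hFdef]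
    have h1 : (P₀.comp (-Polynomial.X)).comp (-Polynomial.X) = P₀ := by
      rw [Polynomial.comp_assoc]
      simp
    have h2 : ((-Polynomial.X : Polynomial ℂ)) ^ D = -(Polynomial.X ^ D) := by
      rw [hDodd.neg_pow]
    simp only [Polynomial.sub_comp, Polynomial.mul_comp, Polynomial.C_comp, Polynomial.pow_comp,
      Polynomial.X_comp]
    rw [h1, h2]
    ring
  have hdvdpos : ∀ ℓ : Fin m, ∀ v : ℂ, (v = w ℓ ∨ v = (w ℓ)⁻¹) →
      (Polynomial.X - Polynomial.C v) ^ τ ℓ ∣ F := by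
    intro ℓ v hv
    have hv0 : v ≠ 0 := hvne ℓ v hv
    have hmemv : v ∈ U := hmem hv0
    have hGana : AnalyticAt ℂ G v := (hGd.analyticOnNhd hU) v hmemv
    obtain ⟨g, hgan, hgev⟩ := exists_factor_of_vanish hGana (τ ℓ) (hGvan ℓ v hv)
    refine pow_dvd_of_eventually hFne (g := fun z => z ^ D * g z) ?_ ?_
    · exact ((continuous_pow D).continuousAt).mul hgan.continuousAt
    · filter_upwards [hgev, hU.mem_nhds hmemv] with z hz1 hz2
      have hz0 : z ≠ 0 := hz2
      have hGz : G z = a z + a (-z) - 2 := by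
        simp only [hGdef]
        rw [← hEqA hz2, ← hEqA (hmem (neg_ne_zero.mpr hz0) : (-z : ℂ) ∈ U)]
        ring
      rw [hFeval z hz0, ← hGz, hz1]
      ring
  have hdvdneg : ∀ ℓ : Fin m, ∀ v : ℂ, (v = w ℓ ∨ v = (w ℓ)⁻¹) →
      (Polynomial.X - Polynomial.C (-v)) ^ τ ℓ ∣ F :=
    fun ℓ v hv => odd_dvd_transfer hFodd (hdvdpos ℓ v hv)
  -- the 4m points, pairwise distinct
  set pt : Fin m × Bool × Bool → ℂ := fun p =>
    (if p.2.1 then -1 else 1) * (if p.2.2 then w p.1 else (w p.1)⁻¹) with hptdef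
  have hximθ : ∀ ℓ, |(θ ℓ).im| < Real.pi := by
    intro ℓ
    rcases hθ ℓ with ⟨t, ht, hteq⟩ | ⟨β, hβ0, hβπ, hβeq⟩
    · rw [hteq]; simpa using Real.pi_pos
    · rw [hβeq]; simpa [abs_of_pos hβ0] using hβπ
  set T : ℝ := 2 ^ (k + 1) with hTdef
  have hT2 : (2 : ℝ) ≤ T := by
    rw [hTdef]
    calc (2 : ℝ) = 2 ^ 1 := (pow_one 2).symm
    _ ≤ 2 ^ (k + 1) := by
      apply pow_le_pow_right₀ one_le_two
      omega
  have hT0 : (0 : ℝ) < T := lt_of_lt_of_le two_pos hT2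
  have hTC : ((2 : ℂ)) ^ (k + 1) = ((T : ℝ) : ℂ) := by
    rw [hTdef]
    push_cast
    ring
  set x : Fin m → ℂ := fun ℓ => -θ ℓ / 2 ^ (k + 1) with hxdef
  have hxim : ∀ ℓ, |(x ℓ).im| < Real.pi / 2 := by
    intro ℓ
    have hx1 : x ℓ = (-θ ℓ) / ((T : ℝ) : ℂ) := by rw [hxdef, hTC]
    have hx2 : (x ℓ).im = -(θ ℓ).im / T := by
      rw [hx1, Complex.div_ofReal_im]
      simp
    rw [hx2, abs_div, abs_neg, abs_of_pos hT0]
    have h3 : |(θ ℓ).im| / T ≤ |(θ ℓ).im| / 2 := by gcongr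
    have h4 : |(θ ℓ).im| / 2 < Real.pi / 2 := by
      have := hximθ ℓ
      linarith
    linarith
  have hwx : ∀ ℓ, w ℓ = Complex.exp (x ℓ) := fun ℓ => by rw [hw, hxdef]
  have hwinvx : ∀ ℓ, (w ℓ)⁻¹ = Complex.exp (-(x ℓ)) := fun ℓ => by
    rw [hwx ℓ]
    exact (Complex.exp_neg (x ℓ)).symm
  set y : Fin m × Bool → ℂ := fun q => if q.2 then x q.1 else -(x q.1) with hydef
  have hyim : ∀ q, |(y q).im| < Real.pi / 2 := by
    intro q
    rw [hydef]
    by_cases h : q.2 <;> simp [h, hxim q.1]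
  have hyexp : ∀ (ℓ : Fin m) (t : Bool),
      (if t then w ℓ else (w ℓ)⁻¹) = Complex.exp (y (ℓ, t)) := by
    intro ℓ t
    rw [hydef]
    by_cases h : t <;> simp [h, hwx, hwinvx, Complex.exp_neg]
  have hcontr : ∀ q1 q2 : Fin m × Bool, Complex.exp (y q1) ≠ -Complex.exp (y q2) := by
    intro q1 q2 h
    have h1 : Complex.exp (y q1 - y q2) = -1 := by
      rw [Complex.exp_sub, h, div_eq_iff (Complex.exp_ne_zero _)]
      ring
    refine exp_ne_neg_one ?_ h1
    have hq1 := hyim q1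
    have hq2 := hyim q2
    calc |(y q1 - y q2).im| = |(y q1).im - (y q2).im| := by rw [Complex.sub_im]
    _ ≤ |(y q1).im| + |(y q2).im| := abs_sub _ _
    _ < Real.pi := by linarith
  have hptinj : Function.Injective pt := by
    rintro ⟨ℓ, s, t⟩ ⟨j, s', t'⟩ hpq
    simp only [hptdef] at hpq
    rw [hyexp ℓ t, hyexp j t'] at hpq
    by_cases hss : s = s'
    · subst hss
      have h2 : Complex.exp (y (ℓ, t)) = Complex.exp (y (j, t')) := by
        cases s <;> norm_num at hpq <;> exact hpq
      have h3 : (fun p : Fin m × Bool => if p.2 then w p.1 else (w p.1)⁻¹) (ℓ, t)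
          = (fun p : Fin m × Bool => if p.2 then w p.1 else (w p.1)⁻¹) (j, t') := by
        show (if t then w ℓ else (w ℓ)⁻¹) = (if t' then w j else (w j)⁻¹)
        rw [hyexp ℓ t, hyexp j t', h2]
      have h4 := hdist h3
      have h5 : ℓ = j := congrArg Prod.fst h4
      have h6 : t = t' := congrArg Prod.snd h4
      subst h5; subst h6
      rfl
    · exfalso
      cases s
      · have hs' : s' = true := by
          cases s'
          · exact absurd rfl hss
          · rfl
        subst hs'
        norm_num at hpq
        exact hcontr (ℓ, t) (j, t') (by linear_combination hpq)
      · have hs' : s' = false := by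
          cases s'
          · rfl
          · exact absurd rfl hss
        subst hs'
        norm_num at hpq
        exact hcontr (j, t') (ℓ, t) (by linear_combination -hpq)
  -- divisibility of the big product
  have hdvdall : ∀ p : Fin m × Bool × Bool,
      (Polynomial.X - Polynomial.C (pt p)) ^ τ p.1 ∣ F := by
    rintro ⟨ℓ, s, t⟩
    have hvch : (if t then w ℓ else (w ℓ)⁻¹) = w ℓ ∨
        (if t then w ℓ else (w ℓ)⁻¹) = (w ℓ)⁻¹ := by
      cases t
      · right; rfl
      · left; rfl
    cases s
    · have hpt : pt (ℓ, false, t) = (if t then w ℓ else (w ℓ)⁻¹) := by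
        simp [hptdef]
      rw [hpt]
      exact hdvdpos ℓ _ hvch
    · have hpt : pt (ℓ, true, t) = -(if t then w ℓ else (w ℓ)⁻¹) := by
        cases t <;> simp [hptdef]
      rw [hpt]
      exact hdvdneg ℓ _ hvch
  have hcop : Pairwise (Function.onFun IsCoprime fun p : Fin m × Bool × Bool =>
      (Polynomial.X - Polynomial.C (pt p)) ^ τ p.1) := by
    intro p q hpq
    exact (Polynomial.pairwise_coprime_X_sub_C hptinj hpq).pow
  have hProd : (∏ p : Fin m × Bool × Bool, (Polynomial.X - Polynomial.C (pt p)) ^ τ p.1) ∣ F :=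
    Fintype.prod_dvd_of_coprime hcop hdvdall
  have hdegProd : (∏ p : Fin m × Bool × Bool,
      (Polynomial.X - Polynomial.C (pt p)) ^ τ p.1).natDegree = 4 * M := by
    rw [Polynomial.natDegree_prod]
    · have hterm : ∀ p : Fin m × Bool × Bool,
          ((Polynomial.X - Polynomial.C (pt p)) ^ τ p.1).natDegree = τ p.1 := by
        intro p
        rw [Polynomial.natDegree_pow, Polynomial.natDegree_X_sub_C, mul_one]
      rw [Finset.sum_congr rfl fun p _ => hterm p]
      rw [Fintype.sum_prod_type]
      have : ∀ ℓ : Fin m, (∑ _b : Bool × Bool, τ ℓ) = 4 * τ ℓ := by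
        intro ℓ
        rw [Finset.sum_const]
        simp
      rw [Finset.sum_congr rfl fun ℓ _ => this ℓ, ← Finset.mul_sum]
    · intro p _
      exact pow_ne_zero _ (Polynomial.X_sub_C_ne_zero (pt p))
  -- degree bounds
  have hdeg1 : ∀ α : ℂ, (Polynomial.C α * Polynomial.X + 1 : Polynomial ℂ).natDegree ≤ 1 := by
    intro α
    refine (Polynomial.natDegree_add_le _ _).trans ?_
    refine max_le ((Polynomial.natDegree_C_mul_le _ _).trans ?_) ?_
    · simp
    · simp
  have hterm : ∀ ℓ : Fin m, (((Polynomial.C (w ℓ)⁻¹ * Polynomial.X + 1) *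
      (Polynomial.C (w ℓ) * Polynomial.X + 1)) ^ τ ℓ).natDegree ≤ 2 * τ ℓ := by
    intro ℓ
    rw [Polynomial.natDegree_pow]
    have h2 : ((Polynomial.C (w ℓ)⁻¹ * Polynomial.X + 1) *
        (Polynomial.C (w ℓ) * Polynomial.X + 1)).natDegree ≤ 2 :=
      (Polynomial.natDegree_mul_le).trans (by
        have := hdeg1 (w ℓ)⁻¹
        have := hdeg1 (w ℓ)
        omega)
    calc τ ℓ * ((Polynomial.C (w ℓ)⁻¹ * Polynomial.X + 1) *
        (Polynomial.C (w ℓ) * Polynomial.X + 1)).natDegree ≤ τ ℓ * 2 :=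
          Nat.mul_le_mul_left _ h2
      _ = 2 * τ ℓ := by ring
  have hdegQ : Q.natDegree ≤ 2 * M := by
    have h0 : Q.natDegree ≤ ∑ ℓ : Fin m, (((Polynomial.C (w ℓ)⁻¹ * Polynomial.X + 1) *
        (Polynomial.C (w ℓ) * Polynomial.X + 1)) ^ τ ℓ).natDegree := by
      rw [hQdef]
      exact Polynomial.natDegree_prod_le _ _
    have h1 : (∑ ℓ : Fin m, (((Polynomial.C (w ℓ)⁻¹ * Polynomial.X + 1) *
        (Polynomial.C (w ℓ) * Polynomial.X + 1)) ^ τ ℓ).natDegree) ≤ ∑ ℓ : Fin m, 2 * τ ℓ :=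
      Finset.sum_le_sum fun ℓ _ => hterm ℓ
    have h2 : (∑ ℓ : Fin m, 2 * τ ℓ) = 2 * M := by rw [← Finset.mul_sum]
    omega
  have hdegCp : Cp.natDegree ≤ 2 * M - 2 := by
    rw [hCpdef]
    refine Polynomial.natDegree_sum_le_of_forall_le _ _ fun j hj => ?_
    obtain ⟨hj1, hj2⟩ := Finset.mem_Icc.mp hj
    refine (Polynomial.natDegree_C_mul_le _ _).trans ?_
    rw [Polynomial.natDegree_X_pow]
    omega
  have hdegP₀ : P₀.natDegree ≤ 4 * M - 2 := by
    rw [hP₀def]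
    refine (Polynomial.natDegree_mul_le).trans ?_
    omega
  have hdegF : F.natDegree ≤ 4 * M - 2 := by
    rw [hFdef]
    refine (Polynomial.natDegree_sub_le _ _).trans (max_le ?_ ?_)
    · refine (Polynomial.natDegree_C_mul_le _ _).trans ?_
      refine (Polynomial.natDegree_sub_le _ _).trans (max_le hdegP₀ ?_)
      refine (Polynomial.natDegree_comp_le).trans ?_
      have : (-Polynomial.X : Polynomial ℂ).natDegree = 1 := by
        rw [Polynomial.natDegree_neg, Polynomial.natDegree_X]
      rw [this, mul_one]
      exact hdegP₀
    · refine (Polynomial.natDegree_C_mul_le _ _).trans ?_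
      rw [Polynomial.natDegree_X_pow]
      omega
  have hle := Polynomial.natDegree_le_of_dvd hProd hFne
  rw [hdegProd] at hle
  omega
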